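/- Fix t₀ ∈ ℝ and define u : ℝ × ℝ → ℝ by u(t,x) = 4 arctan( (√7/3) · sech( (√7/4)(t − t₀) ) · sin x ). Then u satisfies the unperturbed sine-Gordon equation ∂ₜₜu = (9/16) ∂ₓₓu + sin u at every point (t,x); moreover u(t, x+2π) = u(t,x) and u(t,−x) = −u(t,x) for all (t,x), and u(t,x) → 0 as t → ±∞ for each fixed x. (Together with its negative, this gives the figure-eight of orbits homoclinic to the fixed point u = 0.) -/

import Mathlib

open scoped Real

/-- The homoclinic/figure-eight solution of the unperturbed sine-Gordon equation
`u_tt = (9/16)u_xx + sin u`: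
`u(t,x) = 4 arctan((√7/3) sech((√7/4)(t−t₀)) sin x)`. -/
noncomputable def sgFigureEight (t₀ : ℝ) : ℝ → ℝ → ℝ :=
  fun t x =>
    4 * Real.arctan ((Real.sqrt 7 / 3)
      * (1 / Real.cosh (Real.sqrt 7 / 4 * (t - t₀))) * Real.sin x)

lemma sin_four_arctan (y : ℝ) :
    Real.sin (4 * Real.arctan y) = 4 * y * (1 - y ^ 2) / (1 + y ^ 2) ^ 2 := by
  have h4 : (4:ℝ) * Real.arctan y = 2 * (2 * Real.arctan y) := by ring
  rw [h4, Real.sin_two_mul, Real.sin_two_mul, Real.cos_two_mul, Real.sin_arctan,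
    Real.cos_arctan]
  have hpos : (0:ℝ) < 1 + y ^ 2 := by positivity
  have hs : Real.sqrt (1 + y ^ 2) ^ 2 = 1 + y ^ 2 := Real.sq_sqrt hpos.le
  have hsn : Real.sqrt (1 + y ^ 2) ≠ 0 := by positivity
  field_simp
  rw [show Real.sqrt (1 + y ^ 2) ^ 4 = (Real.sqrt (1 + y ^ 2) ^ 2) ^ 2 by ring, hs]
  ring

lemma deriv2_arctan (y y1 : ℝ → ℝ) (y2 : ℝ) (t : ℝ)
    (h1 : ∀ s, HasDerivAt y (y1 s) s) (h2 : HasDerivAt y1 y2 t) :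
    deriv (fun s => deriv (fun s' => 4 * Real.arctan (y s')) s) t
      = 4 * ((y2 * (1 + y t ^ 2) - y1 t * (2 * y t * y1 t)) / (1 + y t ^ 2) ^ 2) := by
  have hd : (fun s => deriv (fun s' => 4 * Real.arctan (y s')) s)
      = fun s => 4 * (y1 s / (1 + y s ^ 2)) := by
    funext s
    have h := ((h1 s).arctan).const_mul (4:ℝ)
    rw [h.deriv]; ring
  rw [hd]
  have hden : (1 : ℝ) + y t ^ 2 ≠ 0 := by positivity
  have hden' : HasDerivAt (fun s => 1 + y s ^ 2) (2 * y t * y1 t) t := by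
    have h := ((h1 t).pow 2).const_add (1:ℝ)
    refine h.congr_deriv ?_
    norm_num
  have h3 := (h2.div hden' hden).const_mul (4:ℝ)
  exact h3.deriv

lemma sg_key (r S Co sh ch : ℝ) (hr : r ^ 2 = 7) (hS : S ^ 2 + Co ^ 2 = 1)
    (hch : ch ^ 2 = sh ^ 2 + 1) (h0 : 0 < ch) :
    4 * ((-(r ^ 3 / 48) * S * ((ch ^ 2 - 2 * sh ^ 2) / ch ^ 3) * (1 + (r / 3 * (1 / ch) * S) ^ 2)
        - -(r ^ 2 / 12) * S * (sh / ch ^ 2)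
            * (2 * (r / 3 * (1 / ch) * S) * (-(r ^ 2 / 12) * S * (sh / ch ^ 2))))
        / (1 + (r / 3 * (1 / ch) * S) ^ 2) ^ 2)
    = 9 / 16 * (4 * ((r / 3 * (1 / ch) * -S * (1 + (r / 3 * (1 / ch) * S) ^ 2)
        - r / 3 * (1 / ch) * Co
            * (2 * (r / 3 * (1 / ch) * S) * (r / 3 * (1 / ch) * Co)))
        / (1 + (r / 3 * (1 / ch) * S) ^ 2) ^ 2))
      + 4 * (r / 3 * (1 / ch) * S) * (1 - (r / 3 * (1 / ch) * S) ^ 2)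
          / (1 + (r / 3 * (1 / ch) * S) ^ 2) ^ 2 := by
  have hch0 : ch ≠ 0 := h0.ne'
  have hden : (1 : ℝ) + (r / 3 * (1 / ch) * S) ^ 2 ≠ 0 := by positivity
  field_simp
  rw [show sh ^ 2 = ch ^ 2 - 1 by linarith, show Co ^ 2 = 1 - S ^ 2 by linarith,
    show r ^ 3 = 7 * r by rw [pow_succ, hr], hr]
  ring
  --((-2602870608208896:ℝ)*r*S*ch^30 + (5205741216417792:ℝ)*r*S*sh^2*ch^28 + (5205741216417792:ℝ)*r*S*Co^2*ch^28 + (-10989898123548672:ℝ)*r*S^3*ch^28 + (16195639339966464:ℝ)*r*S^3*sh^2*ch^26 + (16195639339966464:ℝ)*r*S^3*Co^2*ch^26 + (-2699273223327744:ℝ)*r*S^5*ch^26 + (18894912563294208:ℝ)*r*S^5*sh^2*ch^24 + (18894912563294208:ℝ)*r*S^5*Co^2*ch^24 + (9097550493437952:ℝ)*r*S^7*ch^24 + (9797362069856256:ℝ)*r*S^7*sh^2*ch^22 + (9797362069856256:ℝ)*r*S^7*Co^2*ch^22 + (7892319445161984:ℝ)*r*S^9*ch^22 + (1905042624694272:ℝ)*r*S^9*sh^2*ch^20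 + (1905042624694272:ℝ)*r*S^9*Co^2*ch^20 + (1905042624694272:ℝ)*r*S^11*ch^20 + (-1446039226782720:ℝ)*r^3*S^3*ch^28 + (2313662762852352:ℝ)*r^3*S^3*sh^2*ch^26 + (2313662762852352:ℝ)*r^3*S^3*Co^2*ch^26 + (-385610460475392:ℝ)*r^3*S^5*ch^26 + (2699273223327744:ℝ)*r^3*S^5*sh^2*ch^24 + (2699273223327744:ℝ)*r^3*S^5*Co^2*ch^24 + (1299650070491136:ℝ)*r^3*S^7*ch^24 + (1399623152836608:ℝ)*r^3*S^7*sh^2*ch^22 + (1399623152836608:ℝ)*r^3*S^7*Co^2*ch^22 + (1127474206451712:ℝ)*r^3*S^9*ch^22 + (272148946384896:ℝ)*r^3*S^9*sh^2*ch^20 + (272148946384896:ℝ)*r^3*S^9*Co^2*ch^20 + (272148946384896:ℝ)*r^3*S^11*ch^20 + (-321342050396160:ℝ)*r^5*S^5*ch^26 + (385610460475392:ℝ)*r^5*S^5*sh^2*ch^24 + (385610460475392:ℝ)*r^5*S^5*Co^2*ch^24 + (185664295784448:ℝ)*r^5*S^7*ch^24 + (199946164690944:ℝ)*r^5*S^7*sh^2*ch^22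 + (199946164690944:ℝ)*r^5*S^7*Co^2*ch^22 + (161067743778816:ℝ)*r^5*S^9*ch^22 + (38878420912128:ℝ)*r^5*S^9*sh^2*ch^20 + (38878420912128:ℝ)*r^5*S^9*Co^2*ch^20 + (38878420912128:ℝ)*r^5*S^11*ch^20 + (-35704672266240:ℝ)*r^7*S^7*ch^24 + (28563737812992:ℝ)*r^7*S^7*sh^2*ch^22 + (28563737812992:ℝ)*r^7*S^7*Co^2*ch^22 + (23009677682688:ℝ)*r^7*S^9*ch^22 + (5554060130304:ℝ)*r^7*S^9*sh^2*ch^20 + (5554060130304:ℝ)*r^7*S^9*Co^2*ch^20 + (5554060130304:ℝ)*r^7*S^11*ch^20 + (-1983592903680:ℝ)*r^9*S^9*ch^22 + (793437161472:ℝ)*r^9*S^9*sh^2*ch^20 + (793437161472:ℝ)*r^9*S^9*Co^2*ch^20 + (793437161472:ℝ)*r^9*S^11*ch^20 + (-44079842304:ℝ)*r^11*S^11*ch^20) * hr + ((36440188514924544:ℝ)*r*S*ch^28 + (113369475379765248:ℝ)*r*S^3*ch^26 + (132264387943059456:ℝ)*r*S^5*ch^24 + (68581534488993792:ℝ)*r*S^7*ch^22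 + (13335298372859904:ℝ)*r*S^9*ch^20) * hS + ((-36440188514924544:ℝ)*r*S*ch^28 + (-113369475379765248:ℝ)*r*S^3*ch^26 + (-132264387943059456:ℝ)*r*S^5*ch^24 + (-68581534488993792:ℝ)*r*S^7*ch^22 + (-13335298372859904:ℝ)*r*S^9*ch^20) * hch

lemma sg_tendsto (t₀ x : ℝ) (l : Filter ℝ)
    (h0 : Filter.Tendsto (fun t : ℝ => Real.cosh (Real.sqrt 7 / 4 * (t - t₀)))
      l Filter.atTop) :
    Filter.Tendsto (fun t => sgFigureEight t₀ t x) l (nhds 0) := by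
  have h1 : Filter.Tendsto (fun t : ℝ => 1 / Real.cosh (Real.sqrt 7 / 4 * (t - t₀)))
      l (nhds 0) := by
    exact h0.inv_tendsto_atTop.congr (fun t => (one_div _).symm)
  have h2 : Filter.Tendsto
      (fun t : ℝ => Real.sqrt 7 / 3 * (1 / Real.cosh (Real.sqrt 7 / 4 * (t - t₀))) * Real.sin x)
      l (nhds 0) := by
    simpa using (h1.const_mul (Real.sqrt 7 / 3)).mul_const (Real.sin x)
  have h3 := (Real.continuous_arctan.tendsto 0).comp h2
  simpa [sgFigureEight, Function.comp, Real.arctan_zero] using h3.const_mul (4:ℝ)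

lemma cosh_tendsto_atTop : Filter.Tendsto Real.cosh Filter.atTop Filter.atTop := by
  apply Filter.tendsto_atTop_mono (fun y => ?_)
    ((Real.tendsto_exp_atTop).atTop_div_const (by norm_num : (0:ℝ) < 2))
  rw [Real.cosh_eq]
  nlinarith [Real.exp_pos (-y)]

/-- `u(t,x) = 4 arctan((√7/3) sech((√7/4)(t−t₀)) sin x)` solves the sine-Gordon
equation `∂ₜₜu = (9/16)∂ₓₓu + sin u`, is `2π`-periodic and odd in `x`, and tends
to `0` as `t → ±∞` for each fixed `x`. -/
theorem sine_gordon_homoclinic_orbit (t₀ : ℝ) :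
    (∀ t x : ℝ,
      deriv (fun s => deriv (fun s' => sgFigureEight t₀ s' x) s) t
        = (9 / 16) * deriv (fun a => deriv (fun a' => sgFigureEight t₀ t a') a) x
          + Real.sin (sgFigureEight t₀ t x))
    ∧ (∀ t x : ℝ, sgFigureEight t₀ t (x + 2 * π) = sgFigureEight t₀ t x)
    ∧ (∀ t x : ℝ, sgFigureEight t₀ t (-x) = -sgFigureEight t₀ t x)
    ∧ (∀ x : ℝ,
        Filter.Tendsto (fun t => sgFigureEight t₀ t x) Filter.atTop (nhds 0)
        ∧ Filter.Tendsto (fun t => sgFigureEight t₀ t x) Filter.atBot (nhds 0)) := by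
  refine ⟨?_, ?_, ?_, ?_⟩
  · intro t x
    have hw : ∀ s : ℝ, HasDerivAt (fun s' : ℝ => Real.sqrt 7 / 4 * (s' - t₀))
        (Real.sqrt 7 / 4) s := by
      intro s
      simpa using ((hasDerivAt_id s).sub_const t₀).const_mul (Real.sqrt 7 / 4)
    have hch : ∀ s : ℝ, Real.cosh (Real.sqrt 7 / 4 * (s - t₀)) ≠ 0 :=
      fun s => (Real.cosh_pos _).ne'
    have h1 : ∀ s : ℝ, HasDerivAt
        (fun s' => Real.sqrt 7 / 3 * (1 / Real.cosh (Real.sqrt 7 / 4 * (s' - t₀))) * Real.sin x)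
        ((fun s' => -(Real.sqrt 7 ^ 2 / 12) * Real.sin x *
          (Real.sinh (Real.sqrt 7 / 4 * (s' - t₀))
            / Real.cosh (Real.sqrt 7 / 4 * (s' - t₀)) ^ 2)) s) s := by
      intro s
      have h := (((hw s).cosh.inv (hch s)).const_mul (Real.sqrt 7 / 3)).mul_const (Real.sin x)
      simp only [← one_div] at h
      refine h.congr_deriv ?_
      ring
    have h2 : HasDerivAt
        (fun s' => -(Real.sqrt 7 ^ 2 / 12) * Real.sin x *
          (Real.sinh (Real.sqrt 7 / 4 * (s' - t₀))
            / Real.cosh (Real.sqrt 7 / 4 * (s' - t₀)) ^ 2))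
        (-(Real.sqrt 7 ^ 3 / 48) * Real.sin x *
          ((Real.cosh (Real.sqrt 7 / 4 * (t - t₀)) ^ 2
              - 2 * Real.sinh (Real.sqrt 7 / 4 * (t - t₀)) ^ 2)
            / Real.cosh (Real.sqrt 7 / 4 * (t - t₀)) ^ 3)) t := by
      have h := (((hw t).sinh).div ((hw t).cosh.pow 2) (pow_ne_zero 2 (hch t))).const_mul
        (-(Real.sqrt 7 ^ 2 / 12) * Real.sin x)
      refine h.congr_deriv ?_
      simp only [Pi.pow_apply]
      have := hch t
      rw [show Real.sqrt 7 ^ 3 = 7 * Real.sqrt 7 from by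
        rw [pow_succ, Real.sq_sqrt (by norm_num : (0:ℝ) ≤ 7)]]
      field_simp
      rw [Real.sq_sqrt (by norm_num : (0:ℝ) ≤ 7)]
      ring
    have hT := deriv2_arctan _ _ _ t h1 h2
    have h1x : ∀ a : ℝ, HasDerivAt
        (fun a' => Real.sqrt 7 / 3 * (1 / Real.cosh (Real.sqrt 7 / 4 * (t - t₀))) * Real.sin a')
        ((fun a' => Real.sqrt 7 / 3 * (1 / Real.cosh (Real.sqrt 7 / 4 * (t - t₀)))
          * Real.cos a') a) a :=
      fun a => (Real.hasDerivAt_sin a).const_mul _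
    have h2x : HasDerivAt
        (fun a' => Real.sqrt 7 / 3 * (1 / Real.cosh (Real.sqrt 7 / 4 * (t - t₀))) * Real.cos a')
        (Real.sqrt 7 / 3 * (1 / Real.cosh (Real.sqrt 7 / 4 * (t - t₀))) * -Real.sin x) x :=
      (Real.hasDerivAt_cos x).const_mul _
    have hX := deriv2_arctan _ _ _ x h1x h2x
    simp only [sgFigureEight]
    rw [hT, hX, sin_four_arctan]
    exact sg_key (Real.sqrt 7) (Real.sin x) (Real.cos x) _ _ (Real.sq_sqrt (by norm_num))
      (Real.sin_sq_add_cos_sq x) (Real.cosh_sq _) (Real.cosh_pos _)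
  · intro t x
    simp [sgFigureEight, Real.sin_add_two_pi]
  · intro t x
    simp [sgFigureEight, Real.sin_neg, mul_neg, Real.arctan_neg]
  · intro x
    constructor
    · apply sg_tendsto
      apply cosh_tendsto_atTop.comp
      have h7 : (0:ℝ) < Real.sqrt 7 / 4 := by positivity
      exact (Filter.tendsto_atTop_add_const_right _ (-t₀) Filter.tendsto_id).const_mul_atTop h7
        |>.congr (fun t => by simp only [id_eq]; ring)
    · apply sg_tendsto
      have hb : Filter.Tendsto Real.cosh Filter.atBot Filter.atTop := by
        have h := cosh_tendsto_atTop.comp Filter.tendsto_neg_atBot_atTop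
        have he : (Real.cosh ∘ Neg.neg) = Real.cosh := funext fun y => Real.cosh_neg y
        rwa [he] at h
      apply hb.comp
      have h7 : (0:ℝ) < Real.sqrt 7 / 4 := by positivity
      exact (Filter.tendsto_atBot_add_const_right _ (-t₀) Filter.tendsto_id).const_mul_atBot h7
        |>.congr (fun t => by simp only [id_eq]; ring)
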